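/- Let X, Y, Z be finite-valued random variables forming the Markov chain X − Y − Z, and let U, X̃ be such that U − X̃ − X − Y − Z is a Markov chain. Then I(U; X̃ | Z) ≥ I(U; X̃ | Y) and I(U; X | Z) ≥ I(U; X | Y). -/

import Mathlib

noncomputable section
open scoped BigOperators Classical
open Real

/-- Probability that random variable `X` takes value `a`, under pmf `p`. -/
def pmass {Ω A : Type*} [Fintype Ω] (p : Ω → ℝ) (X : Ω → A) (a : A) : ℝ :=
  ∑ ω, if X ω = a then p ω else 0

/-- Shannon entropy (base 2) of the random variable `X`. -/
def ent {Ω A : Type*} [Fintype Ω] [Fintype A] (p : Ω → ℝ) (X : Ω → A) : ℝ :=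
  ∑ a, -(pmass p X a * Real.logb 2 (pmass p X a))

/-- Conditional Shannon entropy H(X | Y). -/
def condEnt {Ω A B : Type*} [Fintype Ω] [Fintype A] [Fintype B]
    (p : Ω → ℝ) (X : Ω → A) (Y : Ω → B) : ℝ :=
  ent p (fun ω => (X ω, Y ω)) - ent p Y

/-- Mutual information I(X; Y). -/
def mi {Ω A B : Type*} [Fintype Ω] [Fintype A] [Fintype B]
    (p : Ω → ℝ) (X : Ω → A) (Y : Ω → B) : ℝ :=
  ent p X + ent p Y - ent p (fun ω => (X ω, Y ω))

/-- Conditional mutual information I(X; Y | Z). -/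
def cmi {Ω A B C : Type*} [Fintype Ω] [Fintype A] [Fintype B] [Fintype C]
    (p : Ω → ℝ) (X : Ω → A) (Y : Ω → B) (Z : Ω → C) : ℝ :=
  ent p (fun ω => (X ω, Z ω)) + ent p (fun ω => (Y ω, Z ω))
    - ent p (fun ω => (X ω, Y ω, Z ω)) - ent p Z

/-- `X` and `Y` are conditionally independent given `Z` (Markov chain X − Z − Y). -/
def CondIndep {Ω A B C : Type*} [Fintype Ω]
    (p : Ω → ℝ) (X : Ω → A) (Y : Ω → B) (Z : Ω → C) : Prop :=
  ∀ a b c, pmass p (fun ω => (X ω, Y ω, Z ω)) (a, b, c) * pmass p Z c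
    = pmass p (fun ω => (X ω, Z ω)) (a, c) * pmass p (fun ω => (Y ω, Z ω)) (b, c)

/-- `p` is a probability mass function on the finite sample space. -/
structure IsPMF {Ω : Type*} [Fintype Ω] (p : Ω → ℝ) : Prop where
  nonneg : ∀ ω, 0 ≤ p ω
  sum_one : ∑ ω, p ω = 1


/-! ### Auxiliary lemmas -/

section aux

variable {Ω A B C A' : Type*} [Fintype Ω]

lemma pmass_nonneg (p : Ω → ℝ) (hp : ∀ ω, 0 ≤ p ω) (X : Ω → A) (a : A) :
    0 ≤ pmass p X a :=
  Finset.sum_nonneg fun ω _ => by by_cases h : X ω = a <;> simp [pmass, h, hp ω]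

lemma sum_pmass (p : Ω → ℝ) (X : Ω → A) [Fintype A] : ∑ a, pmass p X a = ∑ ω, p ω := by
  unfold pmass
  rw [Finset.sum_comm]
  exact Finset.sum_congr rfl fun ω _ => by simp

lemma pmass_marg_b (p : Ω → ℝ) (X : Ω → A) (Y : Ω → B) (Z : Ω → C) [Fintype B]
    (a : A) (c : C) :
    ∑ b, pmass p (fun ω => (X ω, Y ω, Z ω)) (a, b, c)
      = pmass p (fun ω => (X ω, Z ω)) (a, c) := by
  unfold pmass
  rw [Finset.sum_comm]
  refine Finset.sum_congr rfl fun ω _ => ?_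
  simp only [Prod.mk.injEq]
  by_cases hX : X ω = a <;> by_cases hZ : Z ω = c <;> simp [hX, hZ]

lemma pmass_marg_a (p : Ω → ℝ) (X : Ω → A) (Y : Ω → B) (Z : Ω → C) [Fintype A]
    (b : B) (c : C) :
    ∑ a, pmass p (fun ω => (X ω, Y ω, Z ω)) (a, b, c)
      = pmass p (fun ω => (Y ω, Z ω)) (b, c) := by
  unfold pmass
  rw [Finset.sum_comm]
  refine Finset.sum_congr rfl fun ω _ => ?_
  simp only [Prod.mk.injEq]
  by_cases hY : Y ω = b <;> by_cases hZ : Z ω = c <;> simp [hY, hZ]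

lemma pmass_marg_pair (p : Ω → ℝ) (X : Ω → A) (Z : Ω → C) [Fintype A] (c : C) :
    ∑ a, pmass p (fun ω => (X ω, Z ω)) (a, c) = pmass p Z c := by
  unfold pmass
  rw [Finset.sum_comm]
  refine Finset.sum_congr rfl fun ω _ => ?_
  simp only [Prod.mk.injEq]
  by_cases hZ : Z ω = c <;> simp [hZ]

lemma ent_congr (p : Ω → ℝ) [Fintype A] [Fintype B] (f : A → B)
    (hf : Function.Injective f)
    (X : Ω → A) (X' : Ω → B) (hX : ∀ ω, X' ω = f (X ω)) : ent p X' = ent p X := by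
  unfold ent
  have h1 : ∑ b : B, -(pmass p X' b * Real.logb 2 (pmass p X' b))
      = ∑ b ∈ Finset.univ.image f, -(pmass p X' b * Real.logb 2 (pmass p X' b)) := by
    refine (Finset.sum_subset (Finset.subset_univ _) fun b _ hb => ?_).symm
    have : pmass p X' b = 0 := by
      unfold pmass
      refine Finset.sum_eq_zero fun ω _ => ?_
      have : X' ω ≠ b := by
        intro h; exact hb (Finset.mem_image.2 ⟨X ω, Finset.mem_univ _, by rw [← hX ω, h]⟩)
      simp [this]
    simp [this]
  rw [h1, Finset.sum_image (fun a _ b _ h => hf h)]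
  refine Finset.sum_congr rfl fun a _ => ?_
  have : pmass p X' (f a) = pmass p X a := by
    unfold pmass
    refine Finset.sum_congr rfl fun ω _ => ?_
    rw [hX ω]
    by_cases h : X ω = a
    · simp [h]
    · rw [if_neg h, if_neg fun hh => h (hf hh)]
  rw [this]

lemma cmi_chain {D : Type*} [Fintype A] [Fintype B] [Fintype C] [Fintype D] (p : Ω → ℝ)
    (T : Ω → A) (V : Ω → B) (W : Ω → C) (S : Ω → D) :
    cmi p T (fun ω => (V ω, W ω)) S
      = cmi p T W S + cmi p T V (fun ω => (W ω, S ω)) := by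
  unfold cmi
  rw [ent_congr p (fun x : B × C × D => ((x.1, x.2.1), x.2.2))
      (Function.LeftInverse.injective (g := fun y => (y.1.1, y.1.2, y.2)) fun x => rfl)
      (fun ω => (V ω, W ω, S ω)) _ (fun ω => rfl),
    ent_congr p (fun x : A × B × C × D => (x.1, (x.2.1, x.2.2.1), x.2.2.2))
      (Function.LeftInverse.injective (g := fun y => (y.1, y.2.1.1, y.2.1.2, y.2.2)) fun x => rfl)
      (fun ω => (T ω, V ω, W ω, S ω)) _ (fun ω => rfl)]
  ring

lemma cmi_comm [Fintype A] [Fintype B] [Fintype C] (p : Ω → ℝ)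
    (X : Ω → A) (Y : Ω → B) (Z : Ω → C) : cmi p X Y Z = cmi p Y X Z := by
  unfold cmi
  rw [ent_congr p (fun x : A × B × C => (x.2.1, x.1, x.2.2))
      (Function.LeftInverse.injective (g := fun y : B × A × C => (y.2.1, y.1, y.2.2)) fun x => rfl)
      (fun ω => (X ω, Y ω, Z ω)) _ (fun ω => rfl)]
  ring

lemma cmi_congr₂ [Fintype A] [Fintype B] [Fintype C] [Fintype A'] (p : Ω → ℝ)
    (f : B → A') (hf : Function.Injective f)
    (X : Ω → A) (Y : Ω → B) (Z : Ω → C) :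
    cmi p X (fun ω => f (Y ω)) Z = cmi p X Y Z := by
  unfold cmi
  rw [ent_congr p (fun x : B × C => (f x.1, x.2))
      (fun a b h => by
        simp only [Prod.mk.injEq] at h
        exact Prod.ext (hf h.1) h.2)
      (fun ω => (Y ω, Z ω)) _ (fun ω => rfl),
    ent_congr p (fun x : A × B × C => (x.1, f x.2.1, x.2.2))
      (fun a b h => by
        simp only [Prod.mk.injEq] at h
        exact Prod.ext h.1 (Prod.ext (hf h.2.1) h.2.2))
      (fun ω => (X ω, Y ω, Z ω)) _ (fun ω => rfl)]

lemma cmi_congr₃ [Fintype A] [Fintype B] [Fintype C] [Fintype A'] (p : Ω → ℝ)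
    (f : C → A') (hf : Function.Injective f)
    (X : Ω → A) (Y : Ω → B) (Z : Ω → C) :
    cmi p X Y (fun ω => f (Z ω)) = cmi p X Y Z := by
  unfold cmi
  rw [ent_congr p (fun x : A × C => (x.1, f x.2))
      (fun a b h => by
        simp only [Prod.mk.injEq] at h
        exact Prod.ext h.1 (hf h.2))
      (fun ω => (X ω, Z ω)) _ (fun ω => rfl),
    ent_congr p (fun x : B × C => (x.1, f x.2))
      (fun a b h => by
        simp only [Prod.mk.injEq] at h
        exact Prod.ext h.1 (hf h.2))
      (fun ω => (Y ω, Z ω)) _ (fun ω => rfl),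
    ent_congr p (fun x : A × B × C => (x.1, x.2.1, f x.2.2))
      (fun a b h => by
        simp only [Prod.mk.injEq] at h
        exact Prod.ext h.1 (Prod.ext h.2.1 (hf h.2.2)))
      (fun ω => (X ω, Y ω, Z ω)) _ (fun ω => rfl),
    ent_congr p f hf Z _ (fun ω => rfl)]

lemma cmi_eq_sum [Fintype A] [Fintype B] [Fintype C] (p : Ω → ℝ)
    (X : Ω → A) (Y : Ω → B) (Z : Ω → C) :
    cmi p X Y Z = ∑ c, ∑ a, ∑ b,
      pmass p (fun ω => (X ω, Y ω, Z ω)) (a, b, c) *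
        (Real.logb 2 (pmass p (fun ω => (X ω, Y ω, Z ω)) (a, b, c))
          + Real.logb 2 (pmass p Z c)
          - Real.logb 2 (pmass p (fun ω => (X ω, Z ω)) (a, c))
          - Real.logb 2 (pmass p (fun ω => (Y ω, Z ω)) (b, c))) := by
  set q3 := pmass p (fun ω => (X ω, Y ω, Z ω)) with hq3
  set q2x := pmass p (fun ω => (X ω, Z ω)) with hq2x
  set q2y := pmass p (fun ω => (Y ω, Z ω)) with hq2y
  set q1 := pmass p Z with hq1
  have T1 : ∑ c, ∑ a, ∑ b, q3 (a, b, c) * Real.logb 2 (q1 c)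
      = ∑ c, q1 c * Real.logb 2 (q1 c) := by
    refine Finset.sum_congr rfl fun c _ => ?_
    rw [show ∑ a, ∑ b, q3 (a, b, c) * Real.logb 2 (q1 c)
        = (∑ a, ∑ b, q3 (a, b, c)) * Real.logb 2 (q1 c) by
      rw [Finset.sum_mul]; exact Finset.sum_congr rfl fun a _ => (Finset.sum_mul ..).symm]
    congr 1
    rw [show (∑ a, ∑ b, q3 (a,b,c)) = ∑ a, q2x (a,c) from
      Finset.sum_congr rfl fun a _ => pmass_marg_b p X Y Z a c]
    exact pmass_marg_pair p X Z c
  have T2x : ∑ c, ∑ a, ∑ b, q3 (a, b, c) * Real.logb 2 (q2x (a, c))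
      = ∑ a, ∑ c, q2x (a, c) * Real.logb 2 (q2x (a, c)) := by
    rw [Finset.sum_comm]
    refine Finset.sum_congr rfl fun a _ => Finset.sum_congr rfl fun c _ => ?_
    rw [← Finset.sum_mul, pmass_marg_b p X Y Z a c]
  have T2y : ∑ c, ∑ a, ∑ b, q3 (a, b, c) * Real.logb 2 (q2y (b, c))
      = ∑ b, ∑ c, q2y (b, c) * Real.logb 2 (q2y (b, c)) := by
    rw [show ∑ c, ∑ a, ∑ b, q3 (a,b,c) * Real.logb 2 (q2y (b,c))
        = ∑ c, ∑ b, ∑ a, q3 (a,b,c) * Real.logb 2 (q2y (b,c)) from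
      Finset.sum_congr rfl fun c _ => Finset.sum_comm, Finset.sum_comm]
    refine Finset.sum_congr rfl fun b _ => Finset.sum_congr rfl fun c _ => ?_
    rw [← Finset.sum_mul, pmass_marg_a p X Y Z b c]
  have T3 : ∑ c, ∑ a, ∑ b, q3 (a, b, c) * Real.logb 2 (q3 (a, b, c))
      = ∑ x : A × B × C, q3 x * Real.logb 2 (q3 x) := by
    rw [Fintype.sum_prod_type]
    rw [Finset.sum_comm]
    refine Finset.sum_congr rfl fun a _ => ?_
    rw [Fintype.sum_prod_type, Finset.sum_comm]
  have T2x' : ∑ a, ∑ c, q2x (a,c) * Real.logb 2 (q2x (a,c))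
      = ∑ x : A × C, q2x x * Real.logb 2 (q2x x) := by rw [Fintype.sum_prod_type]
  have T2y' : ∑ b, ∑ c, q2y (b,c) * Real.logb 2 (q2y (b,c))
      = ∑ x : B × C, q2y x * Real.logb 2 (q2y x) := by rw [Fintype.sum_prod_type]
  unfold cmi ent
  simp only [← hq3, ← hq2x, ← hq2y, ← hq1]
  simp only [mul_sub, mul_add, Finset.sum_add_distrib, Finset.sum_sub_distrib]
  rw [T1, T2x, T2y, T3, Finset.sum_neg_distrib, Finset.sum_neg_distrib,
    Finset.sum_neg_distrib, Finset.sum_neg_distrib, T2x', T2y']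
  ring

lemma term_ineq (x u v w : ℝ) (hx : 0 ≤ x) (hu : 0 ≤ u) (hv : 0 ≤ v) (hw : 0 ≤ w)
    (hxu : x ≤ u) (hxv : x ≤ v) (huw : u ≤ w) :
    (x - u * v / w) / Real.log 2 ≤
      x * (Real.logb 2 x + Real.logb 2 w - Real.logb 2 u - Real.logb 2 v) := by
  have hlog2 : 0 < Real.log 2 := Real.log_pos one_lt_two
  rcases eq_or_lt_of_le hx with h0 | hxpos
  · rw [← h0]
    simp only [zero_mul]
    apply div_nonpos_of_nonpos_of_nonneg _ hlog2.le
    have : 0 ≤ u * v / w := div_nonneg (mul_nonneg hu hv) hw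
    linarith
  · have hu' : 0 < u := lt_of_lt_of_le hxpos hxu
    have hv' : 0 < v := lt_of_lt_of_le hxpos hxv
    have hw' : 0 < w := lt_of_lt_of_le hu' huw
    have hfrac : 0 < u * v / (x * w) := by positivity
    have hlog : Real.log (u * v / (x * w)) ≤ u * v / (x * w) - 1 :=
      Real.log_le_sub_one_of_pos hfrac
    have hsplit : Real.log (u * v / (x * w))
        = Real.log u + Real.log v - Real.log x - Real.log w := by
      rw [Real.log_div (by positivity) (by positivity), Real.log_mul hu'.ne' hv'.ne',
        Real.log_mul hxpos.ne' hw'.ne']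
      ring
    have key : Real.log x + Real.log w - Real.log u - Real.log v
        ≥ 1 - u * v / (x * w) := by linarith [hsplit ▸ hlog]
    have hmul : x * (Real.log x + Real.log w - Real.log u - Real.log v)
        ≥ x * (1 - u * v / (x * w)) :=
      mul_le_mul_of_nonneg_left key hx
    have hcalc : x * (1 - u * v / (x * w)) = x - u * v / w := by
      field_simp
    simp only [Real.logb, div_eq_mul_inv]
    rw [ge_iff_le, hcalc] at hmul
    calc (x - u * v * w⁻¹) * (Real.log 2)⁻¹
        ≤ (x * (Real.log x + Real.log w - Real.log u - Real.log v)) * (Real.log 2)⁻¹ := by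
          apply mul_le_mul_of_nonneg_right _ (by positivity)
          simpa only [div_eq_mul_inv] using hmul
      _ = x * (Real.log x * (Real.log 2)⁻¹ + Real.log w * (Real.log 2)⁻¹
            - Real.log u * (Real.log 2)⁻¹ - Real.log v * (Real.log 2)⁻¹) := by ring

variable [Fintype A] [Fintype B] [Fintype C]

lemma q3_le_q2x (p : Ω → ℝ) (X : Ω → A) (Y : Ω → B) (Z : Ω → C) (hp : IsPMF p)
    (a : A) (b : B) (c : C) : pmass p (fun ω => (X ω, Y ω, Z ω)) (a, b, c)
    ≤ pmass p (fun ω => (X ω, Z ω)) (a, c) := by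
  rw [← pmass_marg_b p X Y Z a c]
  exact Finset.single_le_sum (f := fun b => pmass p (fun ω => (X ω, Y ω, Z ω)) (a, b, c))
    (fun b _ => pmass_nonneg p hp.nonneg _ _) (Finset.mem_univ b)

lemma q3_le_q2y (p : Ω → ℝ) (X : Ω → A) (Y : Ω → B) (Z : Ω → C) (hp : IsPMF p)
    (a : A) (b : B) (c : C) : pmass p (fun ω => (X ω, Y ω, Z ω)) (a, b, c)
    ≤ pmass p (fun ω => (Y ω, Z ω)) (b, c) := by
  rw [← pmass_marg_a p X Y Z b c]
  exact Finset.single_le_sum (f := fun a => pmass p (fun ω => (X ω, Y ω, Z ω)) (a, b, c))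
    (fun a _ => pmass_nonneg p hp.nonneg _ _) (Finset.mem_univ a)

lemma q2x_le_q1 (p : Ω → ℝ) (X : Ω → A) (Z : Ω → C) (hp : IsPMF p) (a : A) (c : C) :
    pmass p (fun ω => (X ω, Z ω)) (a, c) ≤ pmass p Z c := by
  rw [← pmass_marg_pair p X Z c]
  exact Finset.single_le_sum (f := fun a => pmass p (fun ω => (X ω, Z ω)) (a, c))
    (fun a _ => pmass_nonneg p hp.nonneg _ _) (Finset.mem_univ a)

lemma cmi_nonneg (p : Ω → ℝ) (hp : IsPMF p) (X : Ω → A) (Y : Ω → B) (Z : Ω → C) :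
    0 ≤ cmi p X Y Z := by
  have hn := hp.nonneg
  rw [cmi_eq_sum]
  set q3 := pmass p (fun ω => (X ω, Y ω, Z ω)) with hq3
  set q2x := pmass p (fun ω => (X ω, Z ω)) with hq2x
  set q2y := pmass p (fun ω => (Y ω, Z ω)) with hq2y
  set q1 := pmass p Z with hq1
  have hlog2 : 0 < Real.log 2 := Real.log_pos one_lt_two
  have lower : ∀ c, ∀ a, ∀ b,
      (q3 (a,b,c) - q2x (a,c) * q2y (b,c) / q1 c) / Real.log 2
        ≤ q3 (a,b,c) * (Real.logb 2 (q3 (a,b,c)) + Real.logb 2 (q1 c)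
            - Real.logb 2 (q2x (a,c)) - Real.logb 2 (q2y (b,c))) := by
    intro c a b
    exact term_ineq _ _ _ _ (pmass_nonneg p hn _ _) (pmass_nonneg p hn _ _)
      (pmass_nonneg p hn _ _) (pmass_nonneg p hn _ _)
      (q3_le_q2x p X Y Z hp a b c) (q3_le_q2y p X Y Z hp a b c) (q2x_le_q1 p X Z hp a c)
  have step : ∑ c, ∑ a, ∑ b, (q3 (a,b,c) - q2x (a,c) * q2y (b,c) / q1 c) / Real.log 2
      ≤ ∑ c, ∑ a, ∑ b, q3 (a,b,c) * (Real.logb 2 (q3 (a,b,c)) + Real.logb 2 (q1 c)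
          - Real.logb 2 (q2x (a,c)) - Real.logb 2 (q2y (b,c))) :=
    Finset.sum_le_sum fun c _ => Finset.sum_le_sum fun a _ =>
      Finset.sum_le_sum fun b _ => lower c a b
  refine le_trans ?_ step
  have hsum3 : ∑ c, ∑ a, ∑ b, q3 (a,b,c) = 1 := by
    have : ∀ c, ∑ a, ∑ b, q3 (a,b,c) = q1 c := by
      intro c
      rw [show (∑ a, ∑ b, q3 (a,b,c)) = ∑ a, q2x (a,c) from
        Finset.sum_congr rfl fun a _ => pmass_marg_b p X Y Z a c]
      exact pmass_marg_pair p X Z c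
    simp_rw [this]
    rw [hq1, sum_pmass, hp.sum_one]
  have hsumr : ∑ c, ∑ a, ∑ b, q2x (a,c) * q2y (b,c) / q1 c ≤ 1 := by
    have inner : ∀ c, ∑ a, ∑ b, q2x (a,c) * q2y (b,c) / q1 c
        = q1 c * (q1 c / q1 c) := by
      intro c
      have h1 : ∀ a, (∑ b, q2x (a,c) * q2y (b,c) / q1 c) = q2x (a,c) * (q1 c / q1 c) := by
        intro a
        rw [← Finset.sum_div, ← Finset.mul_sum,
          show (∑ b, q2y (b,c)) = q1 c from pmass_marg_pair p Y Z c, mul_div_assoc]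
      rw [Finset.sum_congr rfl fun a _ => h1 a, ← Finset.sum_mul,
        show (∑ a, q2x (a,c)) = q1 c from pmass_marg_pair p X Z c]
    have inner_le : ∀ c, q1 c * (q1 c / q1 c) ≤ q1 c := by
      intro c
      rcases eq_or_lt_of_le (pmass_nonneg p hn Z c : (0:ℝ) ≤ q1 c) with h | h
      · have h' : q1 c = 0 := h.symm
        rw [h']; simp
      · rw [div_self h.ne', mul_one]
    calc ∑ c, ∑ a, ∑ b, q2x (a,c) * q2y (b,c) / q1 c
        = ∑ c, q1 c * (q1 c / q1 c) := Finset.sum_congr rfl fun c _ => inner c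
      _ ≤ ∑ c, q1 c := Finset.sum_le_sum fun c _ => inner_le c
      _ = 1 := by rw [hq1, sum_pmass, hp.sum_one]
  have expand : ∑ c, ∑ a, ∑ b, (q3 (a,b,c) - q2x (a,c) * q2y (b,c) / q1 c) / Real.log 2
      = ((∑ c, ∑ a, ∑ b, q3 (a,b,c)) - ∑ c, ∑ a, ∑ b, q2x (a,c) * q2y (b,c) / q1 c)
          / Real.log 2 := by
    simp only [sub_div, Finset.sum_sub_distrib, Finset.sum_div]
  rw [expand, hsum3]
  exact div_nonneg (by linarith [hsumr]) hlog2.le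

lemma cmi_eq_zero (p : Ω → ℝ) (hp : IsPMF p) {X : Ω → A} {Y : Ω → B} {Z : Ω → C}
    (h : CondIndep p X Y Z) : cmi p X Y Z = 0 := by
  have hn := hp.nonneg
  rw [cmi_eq_sum]
  refine Finset.sum_eq_zero fun c _ => Finset.sum_eq_zero fun a _ =>
    Finset.sum_eq_zero fun b _ => ?_
  set q3 := pmass p (fun ω => (X ω, Y ω, Z ω)) (a, b, c) with hq3
  set q2x := pmass p (fun ω => (X ω, Z ω)) (a, c) with hq2x
  set q2y := pmass p (fun ω => (Y ω, Z ω)) (b, c) with hq2y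
  set q1 := pmass p Z c with hq1
  have hci : q3 * q1 = q2x * q2y := h a b c
  rcases eq_or_lt_of_le (pmass_nonneg p hn (fun ω => (X ω, Y ω, Z ω)) (a,b,c) : (0:ℝ) ≤ q3)
    with h0 | hq3pos
  · have hz : q3 = 0 := h0.symm
    rw [hz, zero_mul]
  · have hq2xq3 : q3 ≤ q2x := q3_le_q2x p X Y Z hp a b c
    have hq1q2x : q2x ≤ q1 := q2x_le_q1 p X Z hp a c
    have hq1pos : 0 < q1 := lt_of_lt_of_le hq3pos (le_trans hq2xq3 hq1q2x)
    have hq2xpos : 0 < q2x := lt_of_lt_of_le hq3pos hq2xq3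
    have hq2ypos : 0 < q2y := by
      rcases eq_or_lt_of_le (pmass_nonneg p hn (fun ω => (Y ω, Z ω)) (b,c) : (0:ℝ) ≤ q2y)
        with h0 | h
      · exfalso; nlinarith
      · exact h
    have : Real.logb 2 q3 + Real.logb 2 q1 - Real.logb 2 q2x - Real.logb 2 q2y = 0 := by
      have e1 : Real.logb 2 (q3 * q1) = Real.logb 2 q3 + Real.logb 2 q1 :=
        Real.logb_mul hq3pos.ne' hq1pos.ne'
      have e2 : Real.logb 2 (q2x * q2y) = Real.logb 2 q2x + Real.logb 2 q2y :=
        Real.logb_mul hq2xpos.ne' hq2ypos.ne'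
      have e3 : Real.logb 2 (q3 * q1) = Real.logb 2 (q2x * q2y) := by rw [hci]
      linarith
    rw [this, mul_zero]

end aux

/-- Under the Markov chain U − X̃ − X − Y − Z:
I(U; X̃ | Z) ≥ I(U; X̃ | Y) and I(U; X | Z) ≥ I(U; X | Y). -/
theorem stmt_8 {Ω A B C D E : Type} [Fintype Ω] [Fintype A] [Fintype B] [Fintype C]
    [Fintype D] [Fintype E]
    (p : Ω → ℝ) (hp : IsPMF p)
    (U : Ω → A) (Xt : Ω → B) (X : Ω → C) (Y : Ω → D) (Z : Ω → E)
    (h1 : CondIndep p U (fun ω => (X ω, Y ω, Z ω)) Xt)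
    (h2 : CondIndep p (fun ω => (U ω, Xt ω)) (fun ω => (Y ω, Z ω)) X)
    (h3 : CondIndep p (fun ω => (U ω, Xt ω, X ω)) Z Y) :
    cmi p U Xt Z ≥ cmi p U Xt Y ∧ cmi p U X Z ≥ cmi p U X Y := by
  -- shorthand for nonnegativity
  have n0 : ∀ {A' B' C' : Type} [Fintype A'] [Fintype B'] [Fintype C']
      (F : Ω → A') (G : Ω → B') (H : Ω → C'), 0 ≤ cmi p F G H :=
    fun F G H => cmi_nonneg p hp F G H
  -- ===== consequences of h1 : U ⟂ (X,Y,Z) | Xt =====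
  have z1 : cmi p U (fun ω => (X ω, Y ω, Z ω)) Xt = 0 := cmi_eq_zero p hp h1
  have e1 : cmi p U (fun ω => (X ω, Y ω, Z ω)) Xt
      = cmi p U (fun ω => (Y ω, Z ω)) Xt + cmi p U X (fun ω => ((Y ω, Z ω), Xt ω)) :=
    cmi_chain p U X (fun ω => (Y ω, Z ω)) Xt
  have a1 : cmi p U (fun ω => (Y ω, Z ω)) Xt = 0 := by
    have h1' := n0 U (fun ω => (Y ω, Z ω)) Xt
    have h2' := n0 U X (fun ω => ((Y ω, Z ω), Xt ω))
    linarith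
  have e2 : cmi p U (fun ω => (Y ω, Z ω)) Xt
      = cmi p U Z Xt + cmi p U Y (fun ω => (Z ω, Xt ω)) := cmi_chain p U Y Z Xt
  have a2 : cmi p U Y (fun ω => (Z ω, Xt ω)) = 0 := by
    have h1' := n0 U Z Xt
    have h2' := n0 U Y (fun ω => (Z ω, Xt ω))
    linarith
  have a2' : cmi p U Y (fun ω => (Xt ω, Z ω)) = 0 := by
    rw [show cmi p U Y (fun ω => (Xt ω, Z ω)) = cmi p U Y (fun ω => (Z ω, Xt ω)) from
      cmi_congr₃ p Prod.swap Prod.swap_injective U Y (fun ω => (Z ω, Xt ω))]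
    exact a2
  -- ===== consequences of h3 : (U,Xt,X) ⟂ Z | Y =====
  have z3 : cmi p (fun ω => (U ω, Xt ω, X ω)) Z Y = 0 := cmi_eq_zero p hp h3
  have z3' : cmi p Z (fun ω => (U ω, Xt ω, X ω)) Y = 0 := by
    rw [cmi_comm p Z (fun ω => (U ω, Xt ω, X ω)) Y]; exact z3
  have r3 : cmi p Z (fun ω => (X ω, U ω, Xt ω)) Y
      = cmi p Z (fun ω => (U ω, Xt ω, X ω)) Y :=
    cmi_congr₂ p (fun x : A × B × C => (x.2.2, x.1, x.2.1))
      (Function.LeftInverse.injective (g := fun y : C × A × B => (y.2.1, y.2.2, y.1))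
        fun x => rfl)
      Z (fun ω => (U ω, Xt ω, X ω)) Y
  have z4 : cmi p Z (fun ω => (X ω, U ω, Xt ω)) Y = 0 := by rw [r3]; exact z3'
  have e5 : cmi p Z (fun ω => (X ω, U ω, Xt ω)) Y
      = cmi p Z (fun ω => (U ω, Xt ω)) Y + cmi p Z X (fun ω => ((U ω, Xt ω), Y ω)) :=
    cmi_chain p Z X (fun ω => (U ω, Xt ω)) Y
  have z5 : cmi p Z (fun ω => (U ω, Xt ω)) Y = 0 := by
    have h1' := n0 Z (fun ω => (U ω, Xt ω)) Y
    have h2' := n0 Z X (fun ω => ((U ω, Xt ω), Y ω))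
    linarith
  have e6 : cmi p Z (fun ω => (U ω, Xt ω)) Y
      = cmi p Z Xt Y + cmi p Z U (fun ω => (Xt ω, Y ω)) := cmi_chain p Z U Xt Y
  have z6 : cmi p Z U (fun ω => (Xt ω, Y ω)) = 0 := by
    have h1' := n0 Z Xt Y
    have h2' := n0 Z U (fun ω => (Xt ω, Y ω))
    linarith
  have r4 : cmi p Z (fun ω => (Xt ω, U ω)) Y = cmi p Z (fun ω => (U ω, Xt ω)) Y :=
    cmi_congr₂ p Prod.swap Prod.swap_injective Z (fun ω => (U ω, Xt ω)) Y
  have e7 : cmi p Z (fun ω => (Xt ω, U ω)) Y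
      = cmi p Z U Y + cmi p Z Xt (fun ω => (U ω, Y ω)) := cmi_chain p Z Xt U Y
  have z7 : cmi p Z U Y = 0 := by
    have h1' := n0 Z U Y
    have h2' := n0 Z Xt (fun ω => (U ω, Y ω))
    linarith
  have s6 : cmi p U Z (fun ω => (Xt ω, Y ω)) = 0 := by
    rw [cmi_comm p U Z (fun ω => (Xt ω, Y ω))]; exact z6
  have s7 : cmi p U Z Y = 0 := by rw [cmi_comm p U Z Y]; exact z7
  -- ===== goal 1 =====
  have e3 : cmi p U (fun ω => (Xt ω, Y ω)) Z
      = cmi p U Y Z + cmi p U Xt (fun ω => (Y ω, Z ω)) := cmi_chain p U Xt Y Z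
  have e4 : cmi p U (fun ω => (Y ω, Xt ω)) Z
      = cmi p U Xt Z + cmi p U Y (fun ω => (Xt ω, Z ω)) := cmi_chain p U Y Xt Z
  have r2 : cmi p U (fun ω => (Y ω, Xt ω)) Z = cmi p U (fun ω => (Xt ω, Y ω)) Z :=
    cmi_congr₂ p Prod.swap Prod.swap_injective U (fun ω => (Xt ω, Y ω)) Z
  have e8 : cmi p U (fun ω => (Xt ω, Z ω)) Y
      = cmi p U Z Y + cmi p U Xt (fun ω => (Z ω, Y ω)) := cmi_chain p U Xt Z Y
  have e9 : cmi p U (fun ω => (Z ω, Xt ω)) Y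
      = cmi p U Xt Y + cmi p U Z (fun ω => (Xt ω, Y ω)) := cmi_chain p U Z Xt Y
  have r5 : cmi p U (fun ω => (Z ω, Xt ω)) Y = cmi p U (fun ω => (Xt ω, Z ω)) Y :=
    cmi_congr₂ p Prod.swap Prod.swap_injective U (fun ω => (Xt ω, Z ω)) Y
  have r6 : cmi p U Xt (fun ω => (Y ω, Z ω)) = cmi p U Xt (fun ω => (Z ω, Y ω)) := by
    rw [show cmi p U Xt (fun ω => (Y ω, Z ω)) = cmi p U Xt (fun ω => (Z ω, Y ω)) from
      cmi_congr₃ p Prod.swap Prod.swap_injective U Xt (fun ω => (Z ω, Y ω))]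
  have nYZ : 0 ≤ cmi p U Y Z := n0 U Y Z
  have goal1 : cmi p U Xt Z ≥ cmi p U Xt Y := by linarith
  -- ===== consequences of h2 : (U,Xt) ⟂ (Y,Z) | X =====
  have z8 : cmi p (fun ω => (U ω, Xt ω)) (fun ω => (Y ω, Z ω)) X = 0 := cmi_eq_zero p hp h2
  have e10 : cmi p (fun ω => (U ω, Xt ω)) (fun ω => (Y ω, Z ω)) X
      = cmi p (fun ω => (U ω, Xt ω)) Z X
        + cmi p (fun ω => (U ω, Xt ω)) Y (fun ω => (Z ω, X ω)) :=
    cmi_chain p (fun ω => (U ω, Xt ω)) Y Z X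
  have z9 : cmi p (fun ω => (U ω, Xt ω)) Y (fun ω => (Z ω, X ω)) = 0 := by
    have h1' := n0 (fun ω => (U ω, Xt ω)) Z X
    have h2' := n0 (fun ω => (U ω, Xt ω)) Y (fun ω => (Z ω, X ω))
    linarith
  have s9 : cmi p Y (fun ω => (U ω, Xt ω)) (fun ω => (Z ω, X ω)) = 0 := by
    rw [cmi_comm p Y (fun ω => (U ω, Xt ω)) (fun ω => (Z ω, X ω))]; exact z9
  have r7 : cmi p Y (fun ω => (Xt ω, U ω)) (fun ω => (Z ω, X ω))
      = cmi p Y (fun ω => (U ω, Xt ω)) (fun ω => (Z ω, X ω)) :=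
    cmi_congr₂ p Prod.swap Prod.swap_injective Y (fun ω => (U ω, Xt ω)) (fun ω => (Z ω, X ω))
  have e11 : cmi p Y (fun ω => (Xt ω, U ω)) (fun ω => (Z ω, X ω))
      = cmi p Y U (fun ω => (Z ω, X ω)) + cmi p Y Xt (fun ω => (U ω, Z ω, X ω)) :=
    cmi_chain p Y Xt U (fun ω => (Z ω, X ω))
  have z10 : cmi p Y U (fun ω => (Z ω, X ω)) = 0 := by
    have h1' := n0 Y U (fun ω => (Z ω, X ω))
    have h2' := n0 Y Xt (fun ω => (U ω, Z ω, X ω))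
    linarith
  have s10 : cmi p U Y (fun ω => (Z ω, X ω)) = 0 := by
    rw [cmi_comm p U Y (fun ω => (Z ω, X ω))]; exact z10
  have z10' : cmi p U Y (fun ω => (X ω, Z ω)) = 0 := by
    rw [show cmi p U Y (fun ω => (X ω, Z ω)) = cmi p U Y (fun ω => (Z ω, X ω)) from
      cmi_congr₃ p Prod.swap Prod.swap_injective U Y (fun ω => (Z ω, X ω))]
    exact s10
  -- more consequences of h3 for the second goal
  have r9 : cmi p Z (fun ω => (Xt ω, U ω, X ω)) Y
      = cmi p Z (fun ω => (U ω, Xt ω, X ω)) Y :=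
    cmi_congr₂ p (fun x : A × B × C => (x.2.1, x.1, x.2.2))
      (Function.LeftInverse.injective (g := fun y : B × A × C => (y.2.1, y.1, y.2.2))
        fun x => rfl)
      Z (fun ω => (U ω, Xt ω, X ω)) Y
  have z11 : cmi p Z (fun ω => (Xt ω, U ω, X ω)) Y = 0 := by rw [r9]; exact z3'
  have e12 : cmi p Z (fun ω => (Xt ω, U ω, X ω)) Y
      = cmi p Z (fun ω => (U ω, X ω)) Y + cmi p Z Xt (fun ω => ((U ω, X ω), Y ω)) :=
    cmi_chain p Z Xt (fun ω => (U ω, X ω)) Y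
  have z12 : cmi p Z (fun ω => (U ω, X ω)) Y = 0 := by
    have h1' := n0 Z (fun ω => (U ω, X ω)) Y
    have h2' := n0 Z Xt (fun ω => ((U ω, X ω), Y ω))
    linarith
  have e13 : cmi p Z (fun ω => (U ω, X ω)) Y
      = cmi p Z X Y + cmi p Z U (fun ω => (X ω, Y ω)) := cmi_chain p Z U X Y
  have z13 : cmi p Z U (fun ω => (X ω, Y ω)) = 0 := by
    have h1' := n0 Z X Y
    have h2' := n0 Z U (fun ω => (X ω, Y ω))
    linarith
  have s13 : cmi p U Z (fun ω => (X ω, Y ω)) = 0 := by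
    rw [cmi_comm p U Z (fun ω => (X ω, Y ω))]; exact z13
  -- ===== goal 2 =====
  have e14 : cmi p U (fun ω => (Y ω, X ω)) Z
      = cmi p U X Z + cmi p U Y (fun ω => (X ω, Z ω)) := cmi_chain p U Y X Z
  have r10 : cmi p U (fun ω => (Y ω, X ω)) Z = cmi p U (fun ω => (X ω, Y ω)) Z :=
    cmi_congr₂ p Prod.swap Prod.swap_injective U (fun ω => (X ω, Y ω)) Z
  have e15 : cmi p U (fun ω => (X ω, Y ω)) Z
      = cmi p U Y Z + cmi p U X (fun ω => (Y ω, Z ω)) := cmi_chain p U X Y Z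
  have r11 : cmi p U X (fun ω => (Y ω, Z ω)) = cmi p U X (fun ω => (Z ω, Y ω)) := by
    rw [show cmi p U X (fun ω => (Y ω, Z ω)) = cmi p U X (fun ω => (Z ω, Y ω)) from
      cmi_congr₃ p Prod.swap Prod.swap_injective U X (fun ω => (Z ω, Y ω))]
  have e16 : cmi p U (fun ω => (X ω, Z ω)) Y
      = cmi p U Z Y + cmi p U X (fun ω => (Z ω, Y ω)) := cmi_chain p U X Z Y
  have r12 : cmi p U (fun ω => (Z ω, X ω)) Y = cmi p U (fun ω => (X ω, Z ω)) Y :=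
    cmi_congr₂ p Prod.swap Prod.swap_injective U (fun ω => (X ω, Z ω)) Y
  have e17 : cmi p U (fun ω => (Z ω, X ω)) Y
      = cmi p U X Y + cmi p U Z (fun ω => (X ω, Y ω)) := cmi_chain p U Z X Y
  have goal2 : cmi p U X Z ≥ cmi p U X Y := by linarith
  exact ⟨goal1, goal2⟩
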